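/- For every point p ∈ V, the positivity index of the Euclidean Hessian of g at p is at least m: there exists a real linear subspace W ⊆ ℂ^m with dim_ℝ W ≥ m such that the quadratic form v ↦ D²g(p)(v, v) (the second real Fréchet derivative of g at p evaluated twice on v) is positive definite on W. -/

import Mathlib

set_option maxHeartbeats 1600000

open Complex

variable {E : Type*} [NormedAddCommGroup E] [NormedSpace ℂ E]

/-- First-derivative candidate for `z ↦ normSq (u z)`. -/
noncomputable def DD (u : E → ℂ) (z : E) : E →L[ℝ] ℝ :=
  (2 * (u z).re) • (Complex.reCLM.comp ((fderiv ℂ u z).restrictScalars ℝ)) +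
  (2 * (u z).im) • (Complex.imCLM.comp ((fderiv ℂ u z).restrictScalars ℝ))

lemma hasFDerivAt_normSq_comp {u : E → ℂ} {z : E} (hu : DifferentiableAt ℂ u z) :
    HasFDerivAt (fun y => Complex.normSq (u y)) (DD u z) z := by
  have hd : HasFDerivAt u ((fderiv ℂ u z).restrictScalars ℝ) z :=
    (hu.hasFDerivAt).restrictScalars ℝ
  have hre : HasFDerivAt (fun y => (u y).re)
      (Complex.reCLM.comp ((fderiv ℂ u z).restrictScalars ℝ)) z :=
    Complex.reCLM.hasFDerivAt.comp z hd
  have him : HasFDerivAt (fun y => (u y).im)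
      (Complex.imCLM.comp ((fderiv ℂ u z).restrictScalars ℝ)) z :=
    Complex.imCLM.hasFDerivAt.comp z hd
  have h := (hre.mul hre).add (him.mul him)
  have heq : (fun y => (u y).re * (u y).re + (u y).im * (u y).im)
      = fun y => Complex.normSq (u y) := by
    funext y; rw [Complex.normSq_apply]
  replace h : HasFDerivAt (fun y => (u y).re * (u y).re + (u y).im * (u y).im) _ z := h
  rw [heq] at h
  refine h.congr_fderiv ?_
  ext v
  simp only [DD, ContinuousLinearMap.add_apply, ContinuousLinearMap.smul_apply,
    ContinuousLinearMap.coe_comp', Function.comp_apply, smul_eq_mul]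
  ring

lemma key2 {u : E → ℂ} {s : Set E} (hu : AnalyticOnNhd ℂ u s) {p : E} (hps : p ∈ s) :
    ∃ B : E →L[ℝ] E →L[ℝ] ℝ, HasFDerivAt (DD u) B p ∧
      ∀ v : E, B v v + B (Complex.I • v) (Complex.I • v)
        = 4 * Complex.normSq (fderiv ℂ u p v) := by
  classical
  set w' : E → (E →L[ℂ] ℂ) := fun z => fderiv ℂ u z with hw'def
  have hw' : AnalyticOnNhd ℂ w' s := hu.fderiv
  set W2 : E →L[ℂ] (E →L[ℂ] ℂ) := fderiv ℂ w' p with hW2def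
  have hW2 : HasFDerivAt w' (W2.restrictScalars ℝ) p :=
    ((hw' p hps).differentiableAt.hasFDerivAt).restrictScalars ℝ
  have hup : HasFDerivAt u ((w' p).restrictScalars ℝ) p :=
    ((hu p hps).differentiableAt.hasFDerivAt).restrictScalars ℝ
  -- the continuous linear maps M ↦ reCLM ∘ (M.restrictScalars ℝ), etc.
  set Φre : (E →L[ℂ] ℂ) →L[ℝ] (E →L[ℝ] ℝ) :=
    (ContinuousLinearMap.compL ℝ E ℂ ℝ Complex.reCLM).comp
      (ContinuousLinearMap.restrictScalarsL ℂ E ℂ ℝ ℝ) with hΦre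
  set Φim : (E →L[ℂ] ℂ) →L[ℝ] (E →L[ℝ] ℝ) :=
    (ContinuousLinearMap.compL ℝ E ℂ ℝ Complex.imCLM).comp
      (ContinuousLinearMap.restrictScalarsL ℂ E ℂ ℝ ℝ) with hΦim
  have hF1 : HasFDerivAt (fun z => Complex.reCLM.comp ((w' z).restrictScalars ℝ))
      (Φre.comp (W2.restrictScalars ℝ)) p := Φre.hasFDerivAt.comp p hW2
  have hF2 : HasFDerivAt (fun z => Complex.imCLM.comp ((w' z).restrictScalars ℝ))
      (Φim.comp (W2.restrictScalars ℝ)) p := Φim.hasFDerivAt.comp p hW2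
  have hc1 : HasFDerivAt (fun z => 2 * (u z).re)
      ((2 : ℝ) • (Complex.reCLM.comp ((w' p).restrictScalars ℝ))) p :=
    (Complex.reCLM.hasFDerivAt.comp p hup).const_mul 2
  have hc2 : HasFDerivAt (fun z => 2 * (u z).im)
      ((2 : ℝ) • (Complex.imCLM.comp ((w' p).restrictScalars ℝ))) p :=
    (Complex.imCLM.hasFDerivAt.comp p hup).const_mul 2
  have hB1 := hc1.smul hF1
  have hB2 := hc2.smul hF2
  have hB := hB1.add hB2
  refine ⟨_, hB, ?_⟩
  intro v
  have hW2smul : W2 (Complex.I • v) = Complex.I • (W2 v) := W2.map_smul Complex.I v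
  have hW2vsmul : ∀ x : E, (W2 v) (Complex.I • x) = Complex.I • ((W2 v) x) :=
    fun x => (W2 v).map_smul Complex.I x
  have hw'smul : (w' p) (Complex.I • v) = Complex.I * ((w' p) v) := by
    rw [(w' p).map_smul]; simp [smul_eq_mul]
  simp only [ContinuousLinearMap.add_apply, ContinuousLinearMap.smul_apply,
    ContinuousLinearMap.smulRight_apply, ContinuousLinearMap.coe_comp',
    Function.comp_apply, ContinuousLinearMap.coe_restrictScalars',
    hΦre, hΦim, ContinuousLinearMap.compL_apply,
    ContinuousLinearMap.coe_restrict_scalarsL', smul_eq_mul,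
    Complex.reCLM_apply, Complex.imCLM_apply]
  rw [hW2smul, hw'smul]
  have hfd : fderiv ℂ u p = w' p := rfl
  rw [hfd]
  simp only [ContinuousLinearMap.smul_apply, hW2vsmul, smul_eq_mul, Complex.mul_re,
    Complex.mul_im, Complex.I_re, Complex.I_im, Complex.normSq_apply]
  ring

open Module Submodule Finset

lemma linalg {m : ℕ} (H : (Fin m → ℂ) →L[ℝ] (Fin m → ℂ) →L[ℝ] ℝ)
    (hpos : ∀ v : Fin m → ℂ, v ≠ 0 →
      0 < H v v + H (Complex.I • v) (Complex.I • v)) :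
    ∃ W : Submodule ℝ (Fin m → ℂ), m ≤ Module.finrank ℝ W ∧
      ∀ v ∈ W, v ≠ 0 → 0 < H v v := by
  classical
  set Hb : LinearMap.BilinForm ℝ (Fin m → ℂ) := LinearMap.mk₂ ℝ (fun v w => H v w + H w v)
    (fun x y z => by simp only [map_add, ContinuousLinearMap.add_apply]; ring)
    (fun r x y => by simp only [map_smul, ContinuousLinearMap.smul_apply,
        ContinuousLinearMap.map_smul, smul_eq_mul]; ring)
    (fun x y z => by simp only [map_add, ContinuousLinearMap.add_apply]; ring)
    (fun r x y => by simp only [map_smul, ContinuousLinearMap.smul_apply,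
        ContinuousLinearMap.map_smul, smul_eq_mul]; ring) with hHb
  have hHb_apply : ∀ v w, Hb v w = H v w + H w v := fun v w => rfl
  have hsymm : Hb.IsSymm := ⟨fun v w => by simp only [hHb_apply]; ring⟩
  haveI : Invertible (2 : ℝ) := invertibleOfNonzero two_ne_zero
  have hn2 : finrank ℝ (Fin m → ℂ) = 2 * m := by
    rw [Module.finrank_pi_fintype]
    simp [Complex.finrank_real_complex, mul_comm]
  set n := finrank ℝ (Fin m → ℂ) with hn
  obtain ⟨b, hb⟩ := LinearMap.BilinForm.exists_orthogonal_basis (LinearMap.BilinForm.isSymm_iff.mp hsymm)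
  set c : Fin n → ℝ := fun i => Hb (b i) (b i) with hc
  -- quadratic expansion
  have hq : ∀ v : Fin m → ℂ, Hb v v = ∑ i, (b.repr v i) ^ 2 * c i := by
    intro v
    have expand : Hb v v = ∑ j, ∑ i, (b.repr v i) * ((b.repr v j) * Hb (b i) (b j)) := by
      conv_lhs => rw [← b.sum_repr v]
      rw [map_sum]
      refine Finset.sum_congr rfl fun j _ => ?_
      rw [map_sum, LinearMap.sum_apply]
      refine Finset.sum_congr rfl fun i _ => ?_
      rw [map_smul, map_smul, LinearMap.smul_apply]
      simp only [smul_eq_mul]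
      ring
    rw [expand]
    refine Finset.sum_congr rfl fun j _ => ?_
    rw [Finset.sum_eq_single j (fun i _ hij => by rw [hb hij]; ring) (by simp)]
    simp only [hc]
    ring
  set S : Finset (Fin n) := Finset.univ.filter (fun i => 0 < c i) with hS
  set T : Finset (Fin n) := Finset.univ.filter (fun i => ¬ 0 < c i) with hT
  set W : Submodule ℝ (Fin m → ℂ) := Submodule.span ℝ (b '' ↑S) with hW
  set N : Submodule ℝ (Fin m → ℂ) := Submodule.span ℝ (b '' ↑T) with hN
  have hrank : ∀ s : Finset (Fin n), finrank ℝ (Submodule.span ℝ (b '' (↑s : Set (Fin n)))) = s.card := by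
    intro s
    have hli : LinearIndependent ℝ (fun i : (↑s : Set (Fin n)) => b ↑i) :=
      b.linearIndependent.comp _ Subtype.val_injective
    have h2 := finrank_span_eq_card hli
    have h3 : Set.range (fun i : (↑s : Set (Fin n)) => b ↑i) = b '' ↑s := by
      rw [show (fun i : (↑s : Set (Fin n)) => b ↑i) = b ∘ Subtype.val from rfl,
        Set.range_comp, Subtype.range_coe]
    rw [h3] at h2
    rw [h2]
    simp
  -- positivity on W
  have hWpos : ∀ v ∈ W, v ≠ 0 → 0 < H v v := by
    intro v hv hv0
    have hsupp : ↑(b.repr v).support ⊆ (↑S : Set (Fin n)) := (Basis.mem_span_image b).mp hv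
    have h2 : 0 < Hb v v := by
      rw [hq v]
      apply Finset.sum_pos'
      · intro i _
        by_cases hri : b.repr v i = 0
        · simp [hri]
        · have hiS : i ∈ S := hsupp (Finsupp.mem_support_iff.mpr hri)
          have : 0 < c i := (Finset.mem_filter.mp hiS).2
          positivity
      · obtain ⟨i, hi⟩ := Finsupp.support_nonempty_iff.mpr
          (fun h => hv0 (b.repr.injective (h.trans (map_zero _).symm)))
        refine ⟨i, Finset.mem_univ i, ?_⟩
        have hri : b.repr v i ≠ 0 := Finsupp.mem_support_iff.mp hi
        have hiS : i ∈ S := hsupp hi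
        have : 0 < c i := (Finset.mem_filter.mp hiS).2
        positivity
    rw [hHb_apply] at h2
    linarith
  -- nonpositivity on N
  have hNneg : ∀ v ∈ N, Hb v v ≤ 0 := by
    intro v hv
    have hsupp : ↑(b.repr v).support ⊆ (↑T : Set (Fin n)) := (Basis.mem_span_image b).mp hv
    rw [hq v]
    apply Finset.sum_nonpos
    intro i _
    by_cases hri : b.repr v i = 0
    · simp [hri]
    · have hiT : i ∈ T := hsupp (Finsupp.mem_support_iff.mpr hri)
      have hci : c i ≤ 0 := le_of_not_gt (Finset.mem_filter.mp hiT).2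
      exact mul_nonpos_of_nonneg_of_nonpos (by positivity) hci
  clear_value c S T W N
  -- multiplication by I as a linear equivalence
  set J : (Fin m → ℂ) ≃ₗ[ℝ] (Fin m → ℂ) :=
    { toFun := fun v => Complex.I • v
      invFun := fun v => (-Complex.I) • v
      map_add' := fun x y => smul_add _ _ _
      map_smul' := fun r v => smul_comm _ _ _
      left_inv := fun v => by
        show (-Complex.I) • (Complex.I • v) = v
        rw [smul_smul, neg_mul, Complex.I_mul_I, neg_neg, one_smul]
      right_inv := fun v => by
        show Complex.I • ((-Complex.I) • v) = v
        rw [smul_smul, mul_neg, Complex.I_mul_I, neg_neg, one_smul] } with hJ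
  have hJapp : ∀ v, (J : (Fin m → ℂ) →ₗ[ℝ] (Fin m → ℂ)) v = Complex.I • v := fun v => rfl
  clear_value J
  have hdisj : N ⊓ N.map (J : (Fin m → ℂ) →ₗ[ℝ] (Fin m → ℂ)) = ⊥ := by
    rw [Submodule.eq_bot_iff]
    rintro x ⟨hxN, hxJ⟩
    by_contra hx0
    obtain ⟨u, huN, hux⟩ := hxJ
    have hu0 : u ≠ 0 := by rintro rfl; rw [hJapp, smul_zero] at hux; exact hx0 hux.symm
    have h1 : Hb u u ≤ 0 := hNneg u huN
    have h2 : Hb x x ≤ 0 := hNneg x hxN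
    have h3 := hpos u hu0
    have hux' : Complex.I • u = x := by rw [← hJapp]; exact hux
    rw [hHb_apply] at h1 h2
    rw [← hux'] at h2
    linarith
  have hrankN : finrank ℝ N ≤ m := by
    have h1 := Submodule.finrank_sup_add_finrank_inf_eq N (N.map (J : (Fin m → ℂ) →ₗ[ℝ] (Fin m → ℂ)))
    rw [hdisj] at h1
    have h2 : finrank ℝ (N.map (J : (Fin m → ℂ) →ₗ[ℝ] (Fin m → ℂ))) = finrank ℝ N :=
      LinearEquiv.finrank_map_eq J N
    have h3 : finrank ℝ ↥(N ⊔ N.map (J : (Fin m → ℂ) →ₗ[ℝ] (Fin m → ℂ))) ≤ n :=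
      Submodule.finrank_le _
    rw [h2, finrank_bot, add_zero] at h1
    omega
  have hcardT : T.card ≤ m := by rw [← hrank T, ← hN]; exact hrankN
  have hcardsum : S.card + T.card = n := by
    have h := Finset.card_filter_add_card_filter_not (s := (Finset.univ : Finset (Fin n)))
      (p := fun i => 0 < c i)
    rw [hS, hT]
    simpa using h
  refine ⟨W, ?_, hWpos⟩
  rw [hW, hrank S]
  omega

/-- For every point `p` of the discriminantal variety `V`, the positivity index of the Euclidean
Hessian of `g(z) = |z_1|² + … + |z_m|² + 1/|Δ(z)|²` at `p` is at least `m`: there is a real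
subspace of dimension at least `m` on which the quadratic form `v ↦ D²g(p)(v, v)` is positive
definite. -/
theorem hessian_g_positivity_index_ge
    (m : ℕ) (hm : 1 ≤ m) (Δ : MvPolynomial (Fin m) ℂ) (hΔ : Δ ≠ 0)
    (g : (Fin m → ℂ) → ℝ)
    (hg : ∀ z, g z = (∑ j, ‖z j‖ ^ 2) + 1 / ‖MvPolynomial.eval z Δ‖ ^ 2)
    (p : Fin m → ℂ) (hp : MvPolynomial.eval p Δ ≠ 0) :
    ∃ W : Submodule ℝ (Fin m → ℂ), m ≤ Module.finrank ℝ W ∧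
      ∀ v ∈ W, v ≠ 0 → 0 < (fderiv ℝ (fderiv ℝ g) p v) v := by
  classical
  set w : (Fin m → ℂ) → ℂ := fun z => (MvPolynomial.eval z Δ)⁻¹ with hwdef
  -- rewrite g in terms of normSq
  have hgG : g = fun z => (∑ j, Complex.normSq (z j)) + Complex.normSq (w z) := by
    funext z
    rw [hg z]
    congr 1
    · exact Finset.sum_congr rfl fun j _ => by
        rw [Complex.sq_norm]
    · rw [hwdef]
      simp only [map_inv₀, ← Complex.sq_norm, one_div]
  -- the polynomial map is analytic
  have hA : AnalyticOnNhd ℂ (fun z : Fin m → ℂ => MvPolynomial.eval z Δ) Set.univ :=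
    AnalyticOnNhd.eval_mvPolynomial Δ
  set s : Set (Fin m → ℂ) := {z | MvPolynomial.eval z Δ ≠ 0} with hsdef
  have hs : IsOpen s := by
    have hc : Continuous (fun z : Fin m → ℂ => MvPolynomial.eval z Δ) :=
      continuous_iff_continuousAt.mpr fun z => (hA z (Set.mem_univ z)).continuousAt
    exact isOpen_compl_singleton.preimage hc
  have hps : p ∈ s := hp
  have hw : AnalyticOnNhd ℂ w s := fun z hz => (hA z (Set.mem_univ z)).inv hz
  have hπ : ∀ j : Fin m, AnalyticOnNhd ℂ (fun z : Fin m → ℂ => z j) Set.univ :=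
    fun j z _ => (ContinuousLinearMap.proj (R := ℂ) (φ := fun _ : Fin m => ℂ) j).analyticAt z
  -- first derivative of g on s
  have hDg : ∀ z ∈ s, HasFDerivAt g
      ((∑ j, DD (fun y : Fin m → ℂ => y j) z) + DD w z) z := by
    intro z hz
    have hsum : HasFDerivAt (fun y : Fin m → ℂ => ∑ j, Complex.normSq (y j))
        (∑ j, DD (fun y : Fin m → ℂ => y j) z) z :=
      HasFDerivAt.fun_sum fun j _ =>
        hasFDerivAt_normSq_comp ((hπ j z (Set.mem_univ z)).differentiableAt)
    have h2 : HasFDerivAt (fun y => Complex.normSq (w y)) (DD w z) z :=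
      hasFDerivAt_normSq_comp ((hw z hz).differentiableAt)
    rw [hgG]
    exact hsum.add h2
  have hev : fderiv ℝ g =ᶠ[nhds p]
      (fun z => (∑ j, DD (fun y : Fin m → ℂ => y j) z) + DD w z) := by
    filter_upwards [hs.mem_nhds hps] with z hz
    exact (hDg z hz).fderiv
  -- second derivative
  have hkey := fun j : Fin m => key2 (hπ j) (Set.mem_univ p)
  choose B hB hBval using hkey
  obtain ⟨Bw, hBw, hBwval⟩ := key2 hw hps
  have hhas : HasFDerivAt
      (fun z => (∑ j, DD (fun y : Fin m → ℂ => y j) z) + DD w z)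
      ((∑ j, B j) + Bw) p :=
    (HasFDerivAt.fun_sum fun j _ => hB j).add hBw
  have hH : fderiv ℝ (fderiv ℝ g) p = (∑ j, B j) + Bw :=
    (hhas.congr_of_eventuallyEq hev).fderiv
  set H : (Fin m → ℂ) →L[ℝ] (Fin m → ℂ) →L[ℝ] ℝ := (∑ j, B j) + Bw with hHdef
  have hpos : ∀ v : Fin m → ℂ, v ≠ 0 →
      0 < H v v + H (Complex.I • v) (Complex.I • v) := by
    intro v hv
    have hexp : H v v + H (Complex.I • v) (Complex.I • v)
        = (∑ j, (B j v v + B j (Complex.I • v) (Complex.I • v)))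
          + (Bw v v + Bw (Complex.I • v) (Complex.I • v)) := by
      simp only [hHdef, ContinuousLinearMap.add_apply, ContinuousLinearMap.sum_apply,
        Finset.sum_add_distrib]
      ring
    rw [hexp]
    have hterm : ∀ j, B j v v + B j (Complex.I • v) (Complex.I • v)
        = 4 * Complex.normSq (v j) := by
      intro j
      rw [hBval j v]
      have hproj : fderiv ℂ (fun z : Fin m → ℂ => z j) p
          = ContinuousLinearMap.proj (R := ℂ) (φ := fun _ : Fin m => ℂ) j :=
        (ContinuousLinearMap.proj (R := ℂ) (φ := fun _ : Fin m => ℂ) j).fderiv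
      rw [hproj]
      rfl
    rw [hBwval v]
    have h1 : 0 < ∑ j, (B j v v + B j (Complex.I • v) (Complex.I • v)) := by
      obtain ⟨j, hj⟩ := Function.ne_iff.mp hv
      apply Finset.sum_pos'
      · intro i _
        rw [hterm i]
        have := Complex.normSq_nonneg (v i)
        linarith
      · refine ⟨j, Finset.mem_univ j, ?_⟩
        rw [hterm j]
        have := Complex.normSq_pos.mpr hj
        linarith
    have h2 : 0 ≤ 4 * Complex.normSq (fderiv ℂ w p v) := by
      have := Complex.normSq_nonneg (fderiv ℂ w p v)
      linarith
    linarith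
  obtain ⟨W, hW1, hW2⟩ := linalg H hpos
  exact ⟨W, hW1, fun v hv hv0 => by rw [hH]; exact hW2 v hv hv0⟩
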